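/- Let n > k be positive integers and let v^n be the Galerkin approximation of order n. Then the high-frequency component satisfies Σ_{i=k+1}^n ((v^n_i)'(t)² + λ_i² v^n_i(t)²) ≤ R_k(a,b) · L_k^+(t) for every t ≥ 0, where L_k^+(t) = (ν₂/ν₁)·exp(L H₀ λ_k t / ν₁²) and H₀ = Σ_i b_i² + M(Σ_i λ_i² a_i²). -/

import Mathlib

open Filter Set

/-- Derivative from within the half line `[0, ∞)`. -/
noncomputable def derIci (f : ℝ → ℝ) : ℝ → ℝ := derivWithin f (Set.Ici (0 : ℝ))

/-- The pair `(a, b)` belongs to the energy space `D(A^{1/2}) × H`. -/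
def InEnergy (lam a b : ℕ → ℝ) : Prop :=
  Summable fun i => (b i) ^ 2 + (lam i) ^ 2 * (a i) ^ 2

/-- `R_k(a,b) = Σ_{i>k} (b_i² + λ_i² a_i²)`. -/
noncomputable def Rk (lam a b : ℕ → ℝ) (k : ℕ) : ℝ :=
  ∑' i : ℕ, if k < i then (b i) ^ 2 + (lam i) ^ 2 * (a i) ^ 2 else 0

/-- Lacunary (spectral gap) data: `R_k(a,b)·k²·exp(k λ_k) ≤ 1` for infinitely many
positive integers `k`. -/
def Lacunary (lam a b : ℕ → ℝ) : Prop :=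
  InEnergy lam a b ∧
    {k : ℕ | 0 < k ∧
      Rk lam a b k * (k : ℝ) ^ 2 * Real.exp ((k : ℝ) * lam k) ≤ 1}.Infinite

/-- `M(σ) = ∫₀^σ m(s) ds`. -/
noncomputable def Mfun (m : ℝ → ℝ) (σ : ℝ) : ℝ := ∫ s in (0:ℝ)..σ, m s

/-- The conserved quantity `H₀ = Σ_i b_i² + M(Σ_i λ_i² a_i²)`. -/
noncomputable def H0 (lam : ℕ → ℝ) (m : ℝ → ℝ) (a b : ℕ → ℝ) : ℝ :=
  (∑' i, (b i) ^ 2) + Mfun m (∑' i, (lam i) ^ 2 * (a i) ^ 2)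

/-- Galerkin approximation of order `n` (components of index `> n` extended by zero):
the solution of `v_i'' + m(Σ_{j≤n} λ_j² v_j²) λ_i² v_i = 0` for `i ≤ n`, with
`v_i(0) = a_i`, `v_i'(0) = b_i`. -/
def GalerkinSol (lam : ℕ → ℝ) (m : ℝ → ℝ) (a b : ℕ → ℝ) (n : ℕ)
    (v : ℕ → ℝ → ℝ) : Prop :=
  (∀ i, ContDiffOn ℝ 2 (v i) (Set.Ici 0)) ∧
  (∀ i ≤ n, v i 0 = a i) ∧
  (∀ i ≤ n, derIci (v i) 0 = b i) ∧
  (∀ i, n < i → ∀ t, v i t = 0) ∧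
  (∀ i ≤ n, ∀ t, 0 ≤ t →
    derIci (derIci (v i)) t
      + m (∑ j ∈ Finset.range (n + 1), (lam j) ^ 2 * (v j t) ^ 2)
        * (lam i) ^ 2 * v i t = 0)

/-- Global weak solution with initial data `(a,b)`: a family `v_i ∈ C²([0,∞))` with
`v_i(0) = a_i`, `v_i'(0) = b_i`, such that `Σ v_i'(t)²` and `Σ λ_i² v_i(t)²` converge,
the maps `t ↦ (v_i'(t))_i` and `t ↦ (λ_i v_i(t))_i` are continuous from `[0,∞)` into
`ℓ²`, and `v_i'' + m(Σ_j λ_j² v_j²) λ_i² v_i = 0` for every `i` and every `t ≥ 0`. -/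
def WeakSol (lam : ℕ → ℝ) (m : ℝ → ℝ) (a b : ℕ → ℝ) (v : ℕ → ℝ → ℝ) : Prop :=
  (∀ i, ContDiffOn ℝ 2 (v i) (Set.Ici 0)) ∧
  (∀ i, v i 0 = a i) ∧
  (∀ i, derIci (v i) 0 = b i) ∧
  (∀ t, 0 ≤ t → Summable fun i => (derIci (v i) t) ^ 2) ∧
  (∀ t, 0 ≤ t → Summable fun i => (lam i) ^ 2 * (v i t) ^ 2) ∧
  (∀ t₀, 0 ≤ t₀ → Tendsto (fun t => ∑' i, (derIci (v i) t - derIci (v i) t₀) ^ 2)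
      (nhdsWithin t₀ (Set.Ici 0)) (nhds 0)) ∧
  (∀ t₀, 0 ≤ t₀ → Tendsto (fun t => ∑' i, (lam i) ^ 2 * (v i t - v i t₀) ^ 2)
      (nhdsWithin t₀ (Set.Ici 0)) (nhds 0)) ∧
  (∀ i, ∀ t, 0 ≤ t →
    derIci (derIci (v i)) t
      + m (∑' j, (lam j) ^ 2 * (v j t) ^ 2) * (lam i) ^ 2 * v i t = 0)

set_option maxHeartbeats 1600000

section Aux

/-- extension of `m` to all of `ℝ` -/
private noncomputable def mtld (m : ℝ → ℝ) : ℝ → ℝ := fun s => m (max s 0)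

private noncomputable def Mt (m : ℝ → ℝ) : ℝ → ℝ := fun x => ∫ s in (0:ℝ)..x, mtld m s

private lemma mtld_cont {m : ℝ → ℝ} (hm : ContinuousOn m (Set.Ici 0)) :
    Continuous (mtld m) := by
  have h : Continuous fun s : ℝ => max s 0 := continuous_id.max continuous_const
  exact hm.comp_continuous h (fun x => le_max_right x 0)

private lemma Mt_hasDerivAt {m : ℝ → ℝ} (hc : Continuous (mtld m)) (x : ℝ) :
    HasDerivAt (Mt m) (mtld m x) x :=
  intervalIntegral.integral_hasDerivAt_right (hc.intervalIntegrable _ _)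
    (hc.stronglyMeasurableAtFilter _ _) hc.continuousAt

private lemma Mt_diff_bounds {m : ℝ → ℝ} {μ₁ μ₂ : ℝ} (hc : Continuous (mtld m))
    (hlb : ∀ s, μ₁ ≤ mtld m s) (hub : ∀ s, mtld m s ≤ μ₂) {x y : ℝ} (hxy : x ≤ y) :
    μ₁ * (y - x) ≤ Mt m y - Mt m x ∧ Mt m y - Mt m x ≤ μ₂ * (y - x) := by
  have hI : ∀ a b : ℝ, IntervalIntegrable (mtld m) MeasureTheory.volume a b :=
    fun a b => hc.intervalIntegrable a b
  have hdiff : Mt m y - Mt m x = ∫ s in x..y, mtld m s := by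
    have := intervalIntegral.integral_add_adjacent_intervals (hI 0 x) (hI x y)
    unfold Mt
    linarith
  constructor
  · rw [hdiff]
    calc μ₁ * (y - x) = ∫ _ in x..y, μ₁ := by
          rw [intervalIntegral.integral_const, smul_eq_mul]; ring
      _ ≤ ∫ s in x..y, mtld m s :=
          intervalIntegral.integral_mono_on hxy intervalIntegrable_const (hI x y)
            (fun s _ => hlb s)
  · rw [hdiff]
    calc (∫ s in x..y, mtld m s) ≤ ∫ _ in x..y, μ₂ :=
          intervalIntegral.integral_mono_on hxy (hI x y) intervalIntegrable_const
            (fun s _ => hub s)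
      _ = μ₂ * (y - x) := by rw [intervalIntegral.integral_const, smul_eq_mul]; ring

private lemma Mfun_eq_Mt' {m : ℝ → ℝ} {x : ℝ} (hx : 0 ≤ x) :
    (∫ s in (0:ℝ)..x, m s) = Mt m x := by
  unfold Mt mtld
  apply intervalIntegral.integral_congr
  intro s hs
  rw [Set.uIcc_of_le hx] at hs
  show m s = m (max s 0)
  rw [max_eq_left hs.1]

/-- squares sums -/
private noncomputable def SQ (lam : ℕ → ℝ) (v : ℕ → ℝ → ℝ) (S : Finset ℕ) : ℝ → ℝ :=
  fun s => ∑ j ∈ S, lam j ^ 2 * v j s ^ 2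

private noncomputable def PW (v : ℕ → ℝ → ℝ) (S : Finset ℕ) : ℝ → ℝ :=
  fun s => ∑ j ∈ S, (derIci (v j) s) ^ 2

private noncomputable def AW (lam : ℕ → ℝ) (v : ℕ → ℝ → ℝ) (S : Finset ℕ) : ℝ → ℝ :=
  fun s => ∑ j ∈ S, lam j ^ 2 * (2 * v j s * derIci (v j) s)

private lemma mul_AW (c : ℝ) (lam : ℕ → ℝ) (v : ℕ → ℝ → ℝ) (S : Finset ℕ) (x : ℝ) :
    c * AW lam v S x = ∑ j ∈ S, c * (lam j ^ 2 * (2 * v j x * derIci (v j) x)) := by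
  unfold AW
  exact Finset.mul_sum _ _ _

private lemma sum_split (k n : ℕ) (hkn : k < n) (g : ℕ → ℝ) :
    ∑ j ∈ Finset.range (n+1), g j
      = ∑ j ∈ Finset.range (k+1), g j + ∑ j ∈ Finset.Icc (k+1) n, g j := by
  rw [Finset.range_eq_Ico, Finset.range_eq_Ico, ← Finset.Ico_add_one_right_eq_Icc]
  exact (Finset.sum_Ico_consecutive g (Nat.zero_le (k+1)) (by omega : k+1 ≤ n+1)).symm

private lemma SQ_hasDeriv (lam : ℕ → ℝ) {v : ℕ → ℝ → ℝ}
    (hreg : ∀ i, ContDiffOn ℝ 2 (v i) (Set.Ici 0)) (S : Finset ℕ) {x : ℝ}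
    (hx : x ∈ Set.Ici (0:ℝ)) :
    HasDerivWithinAt (SQ lam v S) (AW lam v S x) (Set.Ici 0) x := by
  unfold SQ AW
  refine HasDerivWithinAt.fun_sum fun j _ => ?_
  have hvj : HasDerivWithinAt (v j) (derIci (v j) x) (Set.Ici 0) x :=
    ((hreg j).differentiableOn (by norm_num) x hx).hasDerivWithinAt
  have h := (hvj.fun_pow 2).const_mul (lam j ^ 2)
  refine h.congr_deriv ?_
  push_cast
  ring

private lemma PW_hasDeriv {v : ℕ → ℝ → ℝ}
    (hreg : ∀ i, ContDiffOn ℝ 2 (v i) (Set.Ici 0)) (S : Finset ℕ) {x : ℝ}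
    (hx : x ∈ Set.Ici (0:ℝ)) :
    HasDerivWithinAt (PW v S)
      (∑ j ∈ S, 2 * derIci (v j) x * derIci (derIci (v j)) x) (Set.Ici 0) x := by
  unfold PW
  refine HasDerivWithinAt.fun_sum fun j _ => ?_
  have h1 : ContDiffOn ℝ 1 (derIci (v j)) (Set.Ici 0) :=
    (hreg j).derivWithin (uniqueDiffOn_Ici 0) (by norm_num)
  have hw : HasDerivWithinAt (derIci (v j)) (derIci (derIci (v j)) x) (Set.Ici 0) x :=
    (h1.differentiableOn (by norm_num) x hx).hasDerivWithinAt
  have h := hw.fun_pow 2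
  refine h.congr_deriv ?_
  push_cast
  ring

private lemma const_of_deriv_zero {f : ℝ → ℝ}
    (hf : ∀ x ∈ Set.Ici (0:ℝ), HasDerivWithinAt f 0 (Set.Ici 0) x) {x : ℝ} (hx : 0 ≤ x) :
    f x = f 0 := by
  have hcont : ContinuousOn (fun s => f s - f 0) (Set.Icc 0 x) := fun s hs =>
    (((hf s hs.1).sub_const _).continuousWithinAt).mono Set.Icc_subset_Ici_self
  have hder : ∀ s ∈ Set.Ico 0 x, HasDerivWithinAt (fun u => f u - f 0) 0 (Set.Ici s) s :=
    fun s hs => ((hf s hs.1).sub_const _).mono (Set.Ici_subset_Ici.mpr hs.1)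
  have h := norm_le_gronwallBound_of_norm_deriv_right_le (f' := fun _ => (0:ℝ))
      (δ := 0) (K := 0) (ε := 0) hcont hder (by simp)
      (fun s _ => by simp) x (Set.mem_Icc.mpr ⟨hx, le_rfl⟩)
  rw [gronwallBound_ε0] at h
  simp only [zero_mul, Real.norm_eq_abs] at h
  have h2 : |f x - f 0| = 0 := le_antisymm h (abs_nonneg _)
  have h3 : f x - f 0 = 0 := abs_eq_zero.mp h2
  linarith

private lemma gronwall_Ici {f f' : ℝ → ℝ} {K : ℝ}
    (hd : ∀ x ∈ Set.Ici (0:ℝ), HasDerivWithinAt f (f' x) (Set.Ici 0) x)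
    (hb : ∀ x ∈ Set.Ici (0:ℝ), |f' x| ≤ K * |f x|)
    (h0 : 0 ≤ f 0) {x : ℝ} (hx : 0 ≤ x) : f x ≤ f 0 * Real.exp (K * x) := by
  have hcont : ContinuousOn f (Set.Icc 0 x) := fun s hs =>
    ((hd s hs.1).continuousWithinAt).mono Set.Icc_subset_Ici_self
  have hder : ∀ s ∈ Set.Ico 0 x, HasDerivWithinAt f (f' s) (Set.Ici s) s :=
    fun s hs => (hd s hs.1).mono (Set.Ici_subset_Ici.mpr hs.1)
  have h := norm_le_gronwallBound_of_norm_deriv_right_le (δ := f 0) (K := K) (ε := 0)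
      hcont hder (by simp [Real.norm_eq_abs, abs_of_nonneg h0])
      (fun s hs => by simpa [Real.norm_eq_abs] using hb s hs.1) x
      (Set.mem_Icc.mpr ⟨hx, le_rfl⟩)
  rw [gronwallBound_ε0, sub_zero] at h
  calc f x ≤ |f x| := le_abs_self _
    _ ≤ f 0 * Real.exp (K * x) := by simpa [Real.norm_eq_abs] using h

end Aux

/-- uniform smallness of the high-frequency components of the Galerkin
approximations: the high-frequency energy is bounded by R_k(a,b)·L_k^+(t). -/
theorem stmt10 (lam : ℕ → ℝ) (hpos : ∀ i, 0 < lam i) (hmono : Monotone lam)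
    (htop : Tendsto lam atTop atTop)
    (μ₁ μ₂ L : ℝ) (hμ₁ : 0 < μ₁) (hL : 0 < L) (m : ℝ → ℝ)
    (hm_reg : ContDiffOn ℝ 1 m (Set.Ici 0))
    (hm_lb : ∀ σ, 0 ≤ σ → μ₁ ≤ m σ) (hm_ub : ∀ σ, 0 ≤ σ → m σ ≤ μ₂)
    (hm_lip : ∀ σ₁ σ₂, 0 ≤ σ₁ → 0 ≤ σ₂ → |m σ₂ - m σ₁| ≤ L * |σ₂ - σ₁|)
    (a b : ℕ → ℝ) (hab : InEnergy lam a b)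
    (k n : ℕ) (hk : 0 < k) (hkn : k < n)
    (v : ℕ → ℝ → ℝ) (hv : GalerkinSol lam m a b n v) :
    ∀ t, 0 ≤ t →
      (∑ i ∈ Finset.Icc (k + 1) n, ((derIci (v i) t) ^ 2 + (lam i) ^ 2 * (v i t) ^ 2))
        ≤ Rk lam a b k *
          ((max 1 μ₂ / min 1 μ₁)
            * Real.exp (L * H0 lam m a b * lam k * t / (min 1 μ₁) ^ 2)) := by
  obtain ⟨hreg, hva, hvb, -, heq⟩ := hv
  intro t ht
  set ν₁ := min 1 μ₁ with hν₁def
  set ν₂ := max 1 μ₂ with hν₂def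
  have hν₁ : 0 < ν₁ := lt_min one_pos hμ₁
  have hν₁1 : ν₁ ≤ 1 := min_le_left _ _
  have hν₁μ : ν₁ ≤ μ₁ := min_le_right _ _
  have hν₂1 : (1:ℝ) ≤ ν₂ := le_max_left _ _
  have hν₂μ : μ₂ ≤ ν₂ := le_max_right _ _
  have hν₂ : 0 < ν₂ := lt_of_lt_of_le one_pos hν₂1
  set c1 := Real.sqrt μ₁ with hc1def
  have hc1 : 0 < c1 := Real.sqrt_pos.mpr hμ₁
  have hc1sq : c1 ^ 2 = μ₁ := Real.sq_sqrt hμ₁.le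
  have hν₁c1 : ν₁ ≤ c1 := by
    rcases le_total μ₁ 1 with h | h
    · have h1 : c1 ≤ 1 := by nlinarith [sq_nonneg (c1 - 1)]
      have h2 : μ₁ ≤ c1 := by nlinarith
      exact le_trans (min_le_right _ _) h2
    · refine le_trans (min_le_left _ _) ?_
      rw [show (1:ℝ) = Real.sqrt 1 from (Real.sqrt_one).symm]
      exact Real.sqrt_le_sqrt h
  have hmc : Continuous (mtld m) := mtld_cont hm_reg.continuousOn
  have hmt_lb : ∀ s, μ₁ ≤ mtld m s := fun s => hm_lb _ (le_max_right _ _)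
  have hmt_ub : ∀ s, mtld m s ≤ μ₂ := fun s => hm_ub _ (le_max_right _ _)
  have hMtb : ∀ x y : ℝ, x ≤ y →
      μ₁ * (y - x) ≤ Mt m y - Mt m x ∧ Mt m y - Mt m x ≤ μ₂ * (y - x) :=
    fun x y h => Mt_diff_bounds hmc hmt_lb hmt_ub h
  have hMt0 : Mt m 0 = 0 := intervalIntegral.integral_same
  have hmtm : ∀ s : ℝ, 0 ≤ s → mtld m s = m s := fun s hs => by
    show m (max s 0) = m s
    rw [max_eq_left hs]
  have hSQn : ∀ (S : Finset ℕ) (s : ℝ), 0 ≤ SQ lam v S s :=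
    fun S s => Finset.sum_nonneg fun j _ => by positivity
  have hPWn : ∀ (S : Finset ℕ) (s : ℝ), 0 ≤ PW v S s :=
    fun S s => Finset.sum_nonneg fun j _ => by positivity
  have hsplitσ : ∀ s : ℝ, SQ lam v (Finset.range (n+1)) s
      = SQ lam v (Finset.range (k+1)) s + SQ lam v (Finset.Icc (k+1) n) s :=
    fun s => sum_split k n hkn _
  have hsplitp : ∀ s : ℝ, PW v (Finset.range (n+1)) s
      = PW v (Finset.range (k+1)) s + PW v (Finset.Icc (k+1) n) s :=
    fun s => sum_split k n hkn _
  have hsplitA : ∀ s : ℝ, AW lam v (Finset.range (n+1)) s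
      = AW lam v (Finset.range (k+1)) s + AW lam v (Finset.Icc (k+1) n) s :=
    fun s => sum_split k n hkn _
  -- the equation
  have hode : ∀ j, j ≤ n → ∀ x : ℝ, 0 ≤ x →
      derIci (derIci (v j)) x = -(m (SQ lam v (Finset.range (n+1)) x) * lam j ^ 2 * v j x) := by
    intro j hj x hx
    have h := heq j hj x hx
    have hs : SQ lam v (Finset.range (n+1)) x = ∑ jj ∈ Finset.range (n+1), lam jj ^ 2 * v jj x ^ 2 := rfl
    rw [hs]
    linarith
  -- conservation of energy
  have hHd : ∀ x ∈ Set.Ici (0:ℝ), HasDerivWithinAt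
      (fun s => PW v (Finset.range (n+1)) s + Mt m (SQ lam v (Finset.range (n+1)) s))
      0 (Set.Ici 0) x := by
    intro x hx
    have hx0 : (0:ℝ) ≤ x := hx
    have h1 := PW_hasDeriv hreg (Finset.range (n+1)) hx
    have h2 := (Mt_hasDerivAt hmc (SQ lam v (Finset.range (n+1)) x)).comp_hasDerivWithinAt x
      (SQ_hasDeriv lam hreg (Finset.range (n+1)) hx)
    have h3 := h1.add h2
    have hval : (∑ j ∈ Finset.range (n+1), 2 * derIci (v j) x * derIci (derIci (v j)) x)
        + mtld m (SQ lam v (Finset.range (n+1)) x) * AW lam v (Finset.range (n+1)) x = 0 := by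
      rw [hmtm _ (hSQn _ _)]
      have hAW : m (SQ lam v (Finset.range (n+1)) x) * AW lam v (Finset.range (n+1)) x
          = ∑ j ∈ Finset.range (n+1),
              m (SQ lam v (Finset.range (n+1)) x) * (lam j ^ 2 * (2 * v j x * derIci (v j) x)) :=
        mul_AW _ lam v _ x
      rw [hAW, ← Finset.sum_add_distrib]
      apply Finset.sum_eq_zero
      intro j hj
      rw [hode j (Finset.mem_range_succ_iff.mp hj) x hx0]
      ring
    rw [hval] at h3
    exact h3
  have hHconst : ∀ x : ℝ, 0 ≤ x →
      PW v (Finset.range (n+1)) x + Mt m (SQ lam v (Finset.range (n+1)) x)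
        = PW v (Finset.range (n+1)) 0 + Mt m (SQ lam v (Finset.range (n+1)) 0) :=
    fun x hx => const_of_deriv_zero hHd hx
  -- initial data
  have hp0 : PW v (Finset.range (n+1)) 0 = ∑ j ∈ Finset.range (n+1), b j ^ 2 := by
    refine Finset.sum_congr rfl fun j hj => ?_
    rw [hvb j (Finset.mem_range_succ_iff.mp hj)]
  have hσ0 : SQ lam v (Finset.range (n+1)) 0 = ∑ j ∈ Finset.range (n+1), lam j ^ 2 * a j ^ 2 := by
    refine Finset.sum_congr rfl fun j hj => ?_
    rw [hva j (Finset.mem_range_succ_iff.mp hj)]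
  have hb2 : Summable fun i => b i ^ 2 :=
    Summable.of_nonneg_of_le (fun i => sq_nonneg _)
      (fun i => le_add_of_nonneg_right (by positivity)) hab
  have ha2 : Summable fun i => lam i ^ 2 * a i ^ 2 :=
    Summable.of_nonneg_of_le (fun i => by positivity)
      (fun i => le_add_of_nonneg_left (sq_nonneg _)) hab
  have htsa_nonneg : (0:ℝ) ≤ ∑' i, lam i ^ 2 * a i ^ 2 := tsum_nonneg fun i => by positivity
  have hH0' : PW v (Finset.range (n+1)) 0 + Mt m (SQ lam v (Finset.range (n+1)) 0)
      ≤ H0 lam m a b := by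
    have hMfun : Mfun m (∑' i, lam i ^ 2 * a i ^ 2) = Mt m (∑' i, lam i ^ 2 * a i ^ 2) :=
      Mfun_eq_Mt' htsa_nonneg
    have h1 : PW v (Finset.range (n+1)) 0 ≤ ∑' i, b i ^ 2 := by
      rw [hp0]; exact hb2.sum_le_tsum _ (fun i _ => sq_nonneg _)
    have h2 : SQ lam v (Finset.range (n+1)) 0 ≤ ∑' i, lam i ^ 2 * a i ^ 2 := by
      rw [hσ0]; exact ha2.sum_le_tsum _ (fun i _ => by positivity)
    have h3 := (hMtb _ _ h2).1
    have h4 : (0:ℝ) ≤ μ₁ * ((∑' i, lam i ^ 2 * a i ^ 2) - SQ lam v (Finset.range (n+1)) 0) :=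
      mul_nonneg hμ₁.le (sub_nonneg.mpr h2)
    unfold H0
    rw [hMfun]
    linarith
  have hMtlow : ∀ x : ℝ, 0 ≤ x → μ₁ * x ≤ Mt m x := by
    intro x hx
    have := (hMtb 0 x hx).1
    rw [hMt0] at this
    linarith
  have hH0pos : 0 ≤ H0 lam m a b := by
    have h1 := hMtlow _ (hSQn (Finset.range (n+1)) 0)
    have h2 := hPWn (Finset.range (n+1)) 0
    have h3 := hSQn (Finset.range (n+1)) 0
    nlinarith [hH0']
  have hcons : ∀ x : ℝ, 0 ≤ x →
      PW v (Finset.range (n+1)) x + Mt m (SQ lam v (Finset.range (n+1)) x) ≤ H0 lam m a b := by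
    intro x hx
    rw [hHconst x hx]
    exact hH0'
  -- bound on |A|
  have hAbound : ∀ x : ℝ, 0 ≤ x →
      c1 * |AW lam v (Finset.range (k+1)) x| ≤ lam k * H0 lam m a b := by
    intro x hx
    have hper : ∀ j ∈ Finset.range (k+1),
        |c1 * (lam j ^ 2 * (2 * v j x * derIci (v j) x))|
          ≤ lam k * (μ₁ * (lam j ^ 2 * v j x ^ 2) + derIci (v j) x ^ 2) := by
      intro j hj
      have hjk : lam j ≤ lam k := hmono (Finset.mem_range_succ_iff.mp hj)
      have hjpos := hpos j
      rw [← hc1sq, abs_le]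
      constructor
      · nlinarith [mul_nonneg hjpos.le (sq_nonneg (c1 * (lam j * v j x) + derIci (v j) x)),
          mul_nonneg (sub_nonneg.mpr hjk)
            (add_nonneg (mul_nonneg (sq_nonneg c1) (sq_nonneg (lam j * v j x)))
              (sq_nonneg (derIci (v j) x)))]
      · nlinarith [mul_nonneg hjpos.le (sq_nonneg (c1 * (lam j * v j x) - derIci (v j) x)),
          mul_nonneg (sub_nonneg.mpr hjk)
            (add_nonneg (mul_nonneg (sq_nonneg c1) (sq_nonneg (lam j * v j x)))
              (sq_nonneg (derIci (v j) x)))]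
    have hstep : c1 * |AW lam v (Finset.range (k+1)) x|
        ≤ lam k * (μ₁ * SQ lam v (Finset.range (k+1)) x + PW v (Finset.range (k+1)) x) := by
      have h1 : c1 * AW lam v (Finset.range (k+1)) x
          = ∑ j ∈ Finset.range (k+1), c1 * (lam j ^ 2 * (2 * v j x * derIci (v j) x)) :=
        mul_AW c1 lam v _ x
      calc c1 * |AW lam v (Finset.range (k+1)) x|
          = |∑ j ∈ Finset.range (k+1), c1 * (lam j ^ 2 * (2 * v j x * derIci (v j) x))| := by
            rw [← h1, abs_mul, abs_of_pos hc1]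
        _ ≤ ∑ j ∈ Finset.range (k+1), |c1 * (lam j ^ 2 * (2 * v j x * derIci (v j) x))| :=
            Finset.abs_sum_le_sum_abs _ _
        _ ≤ ∑ j ∈ Finset.range (k+1),
              lam k * (μ₁ * (lam j ^ 2 * v j x ^ 2) + derIci (v j) x ^ 2) :=
            Finset.sum_le_sum hper
        _ = lam k * (μ₁ * SQ lam v (Finset.range (k+1)) x + PW v (Finset.range (k+1)) x) := by
            unfold SQ PW
            rw [mul_add, Finset.mul_sum, Finset.mul_sum, Finset.mul_sum,
              ← Finset.sum_add_distrib]
            exact Finset.sum_congr rfl fun j _ => by ring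
    refine le_trans hstep ?_
    have h1 : SQ lam v (Finset.range (k+1)) x ≤ SQ lam v (Finset.range (n+1)) x := by
      have := hsplitσ x
      have h2 := hSQn (Finset.Icc (k+1) n) x
      linarith
    have h2 : PW v (Finset.range (k+1)) x ≤ PW v (Finset.range (n+1)) x := by
      have := hsplitp x
      have h3 := hPWn (Finset.Icc (k+1) n) x
      linarith
    have h3 := hMtlow _ (hSQn (Finset.range (n+1)) x)
    have h4 := hcons x hx
    have h5 : μ₁ * SQ lam v (Finset.range (k+1)) x + PW v (Finset.range (k+1)) x
        ≤ H0 lam m a b := by nlinarith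
    exact mul_le_mul_of_nonneg_left h5 (hpos k).le
  -- the modified high-energy functional F and its bounds
  have hFlow : ∀ x : ℝ, 0 ≤ x →
      ν₁ * (PW v (Finset.Icc (k+1) n) x + SQ lam v (Finset.Icc (k+1) n) x)
        ≤ PW v (Finset.Icc (k+1) n) x
          + (Mt m (SQ lam v (Finset.range (n+1)) x) - Mt m (SQ lam v (Finset.range (k+1)) x)) := by
    intro x _
    have hle : SQ lam v (Finset.range (k+1)) x ≤ SQ lam v (Finset.range (n+1)) x := by
      have := hsplitσ x; have h2 := hSQn (Finset.Icc (k+1) n) x; linarith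
    have h := (hMtb _ _ hle).1
    have hτ := hSQn (Finset.Icc (k+1) n) x
    have hP := hPWn (Finset.Icc (k+1) n) x
    have hs := hsplitσ x
    nlinarith [mul_le_mul_of_nonneg_right hν₁μ hτ, mul_le_mul_of_nonneg_right hν₁1 hP]
  have hFhigh : ∀ x : ℝ, 0 ≤ x →
      PW v (Finset.Icc (k+1) n) x
          + (Mt m (SQ lam v (Finset.range (n+1)) x) - Mt m (SQ lam v (Finset.range (k+1)) x))
        ≤ ν₂ * (PW v (Finset.Icc (k+1) n) x + SQ lam v (Finset.Icc (k+1) n) x) := by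
    intro x _
    have hle : SQ lam v (Finset.range (k+1)) x ≤ SQ lam v (Finset.range (n+1)) x := by
      have := hsplitσ x; have h2 := hSQn (Finset.Icc (k+1) n) x; linarith
    have h := (hMtb _ _ hle).2
    have hτ := hSQn (Finset.Icc (k+1) n) x
    have hP := hPWn (Finset.Icc (k+1) n) x
    have hs := hsplitσ x
    nlinarith [mul_le_mul_of_nonneg_right hν₂μ hτ, mul_le_mul_of_nonneg_right hν₂1 hP]
  -- derivative of F
  have hFd : ∀ x ∈ Set.Ici (0:ℝ), HasDerivWithinAt
      (fun s => PW v (Finset.Icc (k+1) n) s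
        + (Mt m (SQ lam v (Finset.range (n+1)) s) - Mt m (SQ lam v (Finset.range (k+1)) s)))
      ((m (SQ lam v (Finset.range (n+1)) x) - m (SQ lam v (Finset.range (k+1)) x))
        * AW lam v (Finset.range (k+1)) x) (Set.Ici 0) x := by
    intro x hx
    have hx0 : (0:ℝ) ≤ x := hx
    have h1 := PW_hasDeriv hreg (Finset.Icc (k+1) n) hx
    have h2 := (Mt_hasDerivAt hmc (SQ lam v (Finset.range (n+1)) x)).comp_hasDerivWithinAt x
      (SQ_hasDeriv lam hreg (Finset.range (n+1)) hx)
    have h3 := (Mt_hasDerivAt hmc (SQ lam v (Finset.range (k+1)) x)).comp_hasDerivWithinAt x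
      (SQ_hasDeriv lam hreg (Finset.range (k+1)) hx)
    have h4 := h1.add (h2.sub h3)
    have hP : (∑ j ∈ Finset.Icc (k+1) n, 2 * derIci (v j) x * derIci (derIci (v j)) x)
        = -(m (SQ lam v (Finset.range (n+1)) x) * AW lam v (Finset.Icc (k+1) n) x) := by
      have hAW : m (SQ lam v (Finset.range (n+1)) x) * AW lam v (Finset.Icc (k+1) n) x
          = ∑ j ∈ Finset.Icc (k+1) n,
              m (SQ lam v (Finset.range (n+1)) x) * (lam j ^ 2 * (2 * v j x * derIci (v j) x)) :=
        mul_AW _ lam v _ x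
      rw [hAW, ← Finset.sum_neg_distrib]
      refine Finset.sum_congr rfl fun j hj => ?_
      rw [hode j (Finset.mem_Icc.mp hj).2 x hx0]
      ring
    have hval : (∑ j ∈ Finset.Icc (k+1) n, 2 * derIci (v j) x * derIci (derIci (v j)) x)
        + (mtld m (SQ lam v (Finset.range (n+1)) x) * AW lam v (Finset.range (n+1)) x
           - mtld m (SQ lam v (Finset.range (k+1)) x) * AW lam v (Finset.range (k+1)) x)
        = (m (SQ lam v (Finset.range (n+1)) x) - m (SQ lam v (Finset.range (k+1)) x))
            * AW lam v (Finset.range (k+1)) x := by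
      rw [hmtm _ (hSQn _ _), hmtm _ (hSQn _ _), hP, hsplitA x]
      ring
    rw [hval] at h4
    exact h4
  -- Gronwall bound hypothesis
  have hbound : ∀ x ∈ Set.Ici (0:ℝ),
      |(m (SQ lam v (Finset.range (n+1)) x) - m (SQ lam v (Finset.range (k+1)) x))
          * AW lam v (Finset.range (k+1)) x|
        ≤ (L * H0 lam m a b * lam k / ν₁ ^ 2)
          * |PW v (Finset.Icc (k+1) n) x
              + (Mt m (SQ lam v (Finset.range (n+1)) x)
                 - Mt m (SQ lam v (Finset.range (k+1)) x))| := by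
    intro x hx
    have hx0 : (0:ℝ) ≤ x := hx
    have hlip := hm_lip (SQ lam v (Finset.range (k+1)) x) (SQ lam v (Finset.range (n+1)) x)
      (hSQn _ _) (hSQn _ _)
    have habsτ : |SQ lam v (Finset.range (n+1)) x - SQ lam v (Finset.range (k+1)) x|
        = SQ lam v (Finset.Icc (k+1) n) x := by
      rw [hsplitσ x, add_sub_cancel_left]
      exact abs_of_nonneg (hSQn _ _)
    rw [habsτ] at hlip
    have hA := hAbound x hx0
    have hAx : |AW lam v (Finset.range (k+1)) x| ≤ lam k * H0 lam m a b / c1 := by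
      rw [le_div_iff₀ hc1]
      linarith
    have hFnn : 0 ≤ PW v (Finset.Icc (k+1) n) x
        + (Mt m (SQ lam v (Finset.range (n+1)) x) - Mt m (SQ lam v (Finset.range (k+1)) x)) := by
      have h1 := hFlow x hx0
      have h2 := hPWn (Finset.Icc (k+1) n) x
      have h3 := hSQn (Finset.Icc (k+1) n) x
      nlinarith
    have hτν : ν₁ * SQ lam v (Finset.Icc (k+1) n) x
        ≤ PW v (Finset.Icc (k+1) n) x
          + (Mt m (SQ lam v (Finset.range (n+1)) x) - Mt m (SQ lam v (Finset.range (k+1)) x)) := by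
      have h1 := hFlow x hx0
      have h2 := hPWn (Finset.Icc (k+1) n) x
      nlinarith
    rw [abs_mul, abs_of_nonneg hFnn]
    set Fx := PW v (Finset.Icc (k+1) n) x
        + (Mt m (SQ lam v (Finset.range (n+1)) x) - Mt m (SQ lam v (Finset.range (k+1)) x))
      with hFx
    set τx := SQ lam v (Finset.Icc (k+1) n) x with hτx
    have hτxn : 0 ≤ τx := hSQn _ _
    calc |m (SQ lam v (Finset.range (n+1)) x) - m (SQ lam v (Finset.range (k+1)) x)|
          * |AW lam v (Finset.range (k+1)) x|
        ≤ (L * τx) * (lam k * H0 lam m a b / c1) :=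
          mul_le_mul hlip hAx (abs_nonneg _) (by positivity)
      _ ≤ (L * H0 lam m a b * lam k / ν₁ ^ 2) * Fx := by
          rw [show (L * τx) * (lam k * H0 lam m a b / c1)
              = (L * τx * (lam k * H0 lam m a b)) / c1 from by ring,
            show (L * H0 lam m a b * lam k / ν₁ ^ 2) * Fx
              = (L * H0 lam m a b * lam k * Fx) / ν₁ ^ 2 from by ring,
            div_le_div_iff₀ hc1 (by positivity)]
          nlinarith [mul_le_mul_of_nonneg_left hτν
              (mul_nonneg (mul_nonneg (mul_nonneg hL.le (hpos k).le) hH0pos) hν₁.le),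
            mul_le_mul_of_nonneg_left hν₁c1
              (mul_nonneg (mul_nonneg (mul_nonneg hL.le (hpos k).le) hH0pos) hFnn)]
  -- apply Gronwall
  have hF0 : 0 ≤ PW v (Finset.Icc (k+1) n) 0
      + (Mt m (SQ lam v (Finset.range (n+1)) 0) - Mt m (SQ lam v (Finset.range (k+1)) 0)) := by
    have h1 := hFlow 0 le_rfl
    have h2 := hPWn (Finset.Icc (k+1) n) 0
    have h3 := hSQn (Finset.Icc (k+1) n) 0
    nlinarith
  have hgron := gronwall_Ici hFd hbound hF0 ht
  -- initial tail energy vs Rk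
  have hE0 : PW v (Finset.Icc (k+1) n) 0 + SQ lam v (Finset.Icc (k+1) n) 0 ≤ Rk lam a b k := by
    have hsum : PW v (Finset.Icc (k+1) n) 0 + SQ lam v (Finset.Icc (k+1) n) 0
        = ∑ i ∈ Finset.Icc (k+1) n,
            (if k < i then b i ^ 2 + lam i ^ 2 * a i ^ 2 else 0) := by
      unfold PW SQ
      rw [← Finset.sum_add_distrib]
      refine Finset.sum_congr rfl fun i hi => ?_
      obtain ⟨h1, h2⟩ := Finset.mem_Icc.mp hi
      rw [if_pos (by omega : k < i), hvb i h2, hva i h2]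
    rw [hsum]
    have hsummable : Summable fun i => if k < i then b i ^ 2 + lam i ^ 2 * a i ^ 2 else 0 := by
      refine Summable.of_nonneg_of_le (fun i => ?_) (fun i => ?_) hab
      · split
        · positivity
        · exact le_rfl
      · split
        · exact le_rfl
        · positivity
    calc (∑ i ∈ Finset.Icc (k+1) n, (if k < i then b i ^ 2 + lam i ^ 2 * a i ^ 2 else 0))
        ≤ ∑' i, (if k < i then b i ^ 2 + lam i ^ 2 * a i ^ 2 else 0) := by
          refine hsummable.sum_le_tsum _ (fun i _ => ?_)
          split
          · positivity
          · exact le_rfl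
      _ = Rk lam a b k := rfl
  have hF0le : PW v (Finset.Icc (k+1) n) 0
      + (Mt m (SQ lam v (Finset.range (n+1)) 0) - Mt m (SQ lam v (Finset.range (k+1)) 0))
      ≤ ν₂ * (PW v (Finset.Icc (k+1) n) 0 + SQ lam v (Finset.Icc (k+1) n) 0) := hFhigh 0 le_rfl
  -- conclusion
  have hexp : Real.exp ((L * H0 lam m a b * lam k / ν₁ ^ 2) * t)
      = Real.exp (L * H0 lam m a b * lam k * t / ν₁ ^ 2) := by
    apply congrArg
    ring
  rw [hexp] at hgron
  have hEE : (0:ℝ) < Real.exp (L * H0 lam m a b * lam k * t / ν₁ ^ 2) := Real.exp_pos _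
  rw [show (∑ i ∈ Finset.Icc (k + 1) n, ((derIci (v i) t) ^ 2 + (lam i) ^ 2 * (v i t) ^ 2))
      = PW v (Finset.Icc (k+1) n) t + SQ lam v (Finset.Icc (k+1) n) t from
        Finset.sum_add_distrib]
  rw [show Rk lam a b k * (ν₂ / ν₁ * Real.exp (L * H0 lam m a b * lam k * t / ν₁ ^ 2))
      = ν₂ * Rk lam a b k * Real.exp (L * H0 lam m a b * lam k * t / ν₁ ^ 2) / ν₁ from by ring,
    le_div_iff₀ hν₁]
  have hc2 : (PW v (Finset.Icc (k+1) n) 0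
      + (Mt m (SQ lam v (Finset.range (n+1)) 0) - Mt m (SQ lam v (Finset.range (k+1)) 0)))
        * Real.exp (L * H0 lam m a b * lam k * t / ν₁ ^ 2)
      ≤ ν₂ * (PW v (Finset.Icc (k+1) n) 0 + SQ lam v (Finset.Icc (k+1) n) 0)
        * Real.exp (L * H0 lam m a b * lam k * t / ν₁ ^ 2) :=
    mul_le_mul_of_nonneg_right hF0le hEE.le
  have hc3 : ν₂ * (PW v (Finset.Icc (k+1) n) 0 + SQ lam v (Finset.Icc (k+1) n) 0)
        * Real.exp (L * H0 lam m a b * lam k * t / ν₁ ^ 2)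
      ≤ ν₂ * Rk lam a b k * Real.exp (L * H0 lam m a b * lam k * t / ν₁ ^ 2) := by
    have h := mul_le_mul_of_nonneg_left hE0 hν₂.le
    exact mul_le_mul_of_nonneg_right h hEE.le
  have hc1' := hFlow t ht
  nlinarith [hgron]
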